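/- Let T ≥ 2 be an integer, let R₁, …, R_T be nonnegative real numbers, and let C₁ ≥ C₂ ≥ … ≥ C_T > 0. Let M = max_{t=1,…,T} (R_t/C_t). Then R_T/C_T + Σ_{t=1}^{T-1} (R_t − R_{t+1})/C_t ≤ M·(T − Σ_{t=2}^{T} C_t/C_{t-1}). -/

import Mathlib

/-- Capacity-ratio form of Theorem 3: with `R` nonnegative, `C` positive and
nonincreasing, and `M = max_t R_t/C_t`, the separation scheme's channel-use count
is at most `M·(T − Σ_{t=2}^{T} C_t/C_{t-1})`. -/
theorem stmt_8 (T : ℕ) (hT : 2 ≤ T) (R C : ℕ → ℝ) (M : ℝ)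
    (hRnonneg : ∀ t ∈ Finset.Icc 1 T, 0 ≤ R t)
    (hCpos : ∀ t ∈ Finset.Icc 1 T, 0 < C t)
    (hCmono : ∀ t ∈ Finset.Icc 1 (T - 1), C (t + 1) ≤ C t)
    (hM : M = (Finset.Icc 1 T).sup' (Finset.nonempty_Icc.mpr (by omega))
      (fun t => R t / C t)) :
    R T / C T + ∑ t ∈ Finset.Icc 1 (T - 1), (R t - R (t + 1)) / C t
      ≤ M * ((T : ℝ) - ∑ t ∈ Finset.Icc 2 T, C t / C (t - 1)) := by
  have hMle : ∀ t ∈ Finset.Icc 1 T, R t / C t ≤ M := by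
    intro t ht
    rw [hM]
    exact Finset.le_sup' (fun t => R t / C t) ht
  -- reindexing lemma
  have hre : ∀ f : ℕ → ℝ,
      ∑ t ∈ Finset.Icc 1 (T - 1), f (t + 1) = ∑ t ∈ Finset.Icc 2 T, f t := by
    intro f
    have hmap : Finset.Icc 2 T = Finset.map (addLeftEmbedding 1) (Finset.Icc 1 (T - 1)) := by
      rw [Finset.map_add_left_Icc]; congr 1; omega
    rw [hmap, Finset.sum_map]
    apply Finset.sum_congr rfl
    intro t ht
    simp [addLeftEmbedding_apply, Nat.add_comm]
  -- split the LHS sum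
  have hsplit : ∑ t ∈ Finset.Icc 1 (T - 1), (R t - R (t + 1)) / C t
      = ∑ t ∈ Finset.Icc 1 (T - 1), R t / C t
        - ∑ t ∈ Finset.Icc 2 T, R t / C (t - 1) := by
    rw [← hre (fun t => R t / C (t - 1)), ← Finset.sum_sub_distrib]
    apply Finset.sum_congr rfl
    intro t ht
    simp only [Nat.add_sub_cancel]
    rw [sub_div]
  have hins1 : (1 : ℕ) ∉ Finset.Icc 2 T := by simp
  have hIcc1T : Finset.Icc 1 T = insert 1 (Finset.Icc 2 T) := by
    ext x; simp [Finset.mem_Icc, Finset.mem_insert]; omega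
  have hfull : ∀ f : ℕ → ℝ, ∑ t ∈ Finset.Icc 1 T, f t
      = f 1 + ∑ t ∈ Finset.Icc 2 T, f t := by
    intro f; rw [hIcc1T, Finset.sum_insert hins1]
  have htop : ∑ t ∈ Finset.Icc 1 T, R t / C t
      = ∑ t ∈ Finset.Icc 1 (T - 1), R t / C t + R T / C T := by
    have : T = (T - 1) + 1 := by omega
    rw [this, Finset.sum_Icc_succ_top (by omega)]
    congr 1 <;> rw [← this]
  -- rewrite LHS
  have hLHS : R T / C T + ∑ t ∈ Finset.Icc 1 (T - 1), (R t - R (t + 1)) / C t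
      = R 1 / C 1 + ∑ t ∈ Finset.Icc 2 T, (R t / C t - R t / C (t - 1)) := by
    rw [hsplit, Finset.sum_sub_distrib]
    have h1 := hfull (fun t => R t / C t)
    linarith [htop]
  rw [hLHS]
  -- termwise bound
  have hterm : ∀ t ∈ Finset.Icc 2 T,
      R t / C t - R t / C (t - 1) ≤ M - M * (C t / C (t - 1)) := by
    intro t ht
    simp only [Finset.mem_Icc] at ht
    have hbpos : 0 < C t := hCpos t (by simp [Finset.mem_Icc]; omega)
    have hapos : 0 < C (t - 1) := hCpos (t - 1) (by simp [Finset.mem_Icc]; omega)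
    have hba : C t ≤ C (t - 1) := by
      have := hCmono (t - 1) (by simp [Finset.mem_Icc]; omega)
      have ht1 : t - 1 + 1 = t := by omega
      rwa [ht1] at this
    have hRle : R t ≤ M * C t := by
      have := hMle t (by simp [Finset.mem_Icc]; omega)
      calc R t = R t / C t * C t := by field_simp
        _ ≤ M * C t := by
          exact mul_le_mul_of_nonneg_right this hbpos.le
    have h0 : 0 ≤ 1 / C t - 1 / C (t - 1) := by
      have := one_div_le_one_div_of_le hbpos hba
      linarith
    have step : R t * (1 / C t - 1 / C (t - 1)) ≤ M * C t * (1 / C t - 1 / C (t - 1)) :=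
      mul_le_mul_of_nonneg_right hRle h0
    have l : R t / C t - R t / C (t - 1) = R t * (1 / C t - 1 / C (t - 1)) := by ring
    have r : M - M * (C t / C (t - 1)) = M * C t * (1 / C t - 1 / C (t - 1)) := by
      field_simp
    rw [l, r]; exact step
  have hsum := Finset.sum_le_sum hterm
  have hcard : (Finset.Icc 2 T).card = T - 1 := by
    rw [Nat.card_Icc]; omega
  have hR1 : R 1 / C 1 ≤ M := hMle 1 (by simp [Finset.mem_Icc]; omega)
  have hrhs : ∑ t ∈ Finset.Icc 2 T, (M - M * (C t / C (t - 1)))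
      = M * ((T : ℝ) - 1) - M * ∑ t ∈ Finset.Icc 2 T, C t / C (t - 1) := by
    rw [Finset.sum_sub_distrib, Finset.sum_const, hcard, ← Finset.mul_sum,
      nsmul_eq_mul, Nat.cast_sub (by omega : 1 ≤ T)]
    push_cast; ring
  rw [hrhs] at hsum
  linarith
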